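/- For r = 2 the Thom polynomial candidate T = S_{(2,2,2)} + 5S_{(1,2,3)} + 6S_{(1,1,4)} + 19S_{(2,4)} + 30S_{(1,5)} + 36S_{(6)} + 5S_{(3,3)} satisfies the A-series restriction equations: T(-{b}) = 0, T(x - {b, 2x}) = 0, T(x - {b, 3x}) = 0, and T(x - {b, 4x}) = ∏_{a ∈ {x,2x,3x}} ∏_{c ∈ {b, 4x}} (a - c), as identities of polynomials in ℤ[x, b]. -/

import Mathlib

noncomputable section

def Scoef {R : Type*} [CommRing R] (f : PowerSeries R) : ℤ → R :=
  fun k => if k < 0 then 0 else PowerSeries.coeff k.toNat f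

/-- Jacobi–Trudi determinant `S_I = det(S_{i_p+p-q})`. -/
def schurJT {R : Type*} [CommRing R] (f : PowerSeries R) {s : ℕ} (I : Fin s → ℕ) : R :=
  (Matrix.of fun p q : Fin s => Scoef f ((I p : ℤ) + (p : ℤ) - (q : ℤ))).det

abbrev R18 : Type := MvPolynomial (Fin 2) ℤ

/-- the variable `x` -/
def xv : R18 := MvPolynomial.X 0
/-- the Chern root `b` -/
def bv : R18 := MvPolynomial.X 1

/-- The Thom polynomial candidate for `r = 2` evaluated on a series. -/
def T18 (g : PowerSeries R18) : R18 :=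
  schurJT g ![2,2,2] + 5 * schurJT g ![1,2,3] + 6 * schurJT g ![1,1,4]
    + 19 * schurJT g ![2,4] + 30 * schurJT g ![1,5] + 36 * schurJT g ![6]
    + 5 * schurJT g ![3,3]

open PowerSeries

/-- The series `(1-bX)(1-cX)/(1-xX)`. -/
def serA (b c : R18) : PowerSeries R18 :=
  PowerSeries.mk fun n => match n with
  | 0 => 1
  | 1 => xv - b - c
  | (n+2) => xv ^ n * ((xv - b) * (xv - c))

lemma serA_mul (b c : R18) :
    (1 - PowerSeries.C xv * PowerSeries.X) * serA b c =
      (1 - PowerSeries.C b * PowerSeries.X) *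
        (1 - PowerSeries.C c * PowerSeries.X) := by
  have hrhs : (1 - C b * X) * (1 - C c * X)
      = 1 - C (b + c) * X + C (b * c) * (X * X) := by
    simp only [map_add, map_mul]; ring
  rw [hrhs, sub_mul, one_mul, mul_assoc]
  refine PowerSeries.ext fun n => ?_
  rcases n with _ | _ | _ | n <;>
    simp only [map_sub, map_add, coeff_mk, serA, coeff_C_mul, coeff_succ_X_mul,
      coeff_zero_X_mul, add_mul, coeff_X, coeff_one, mul_zero, mul_one,
      if_true, if_false, Nat.succ_ne_zero, reduceIte, pow_succ]
  · norm_num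
  · norm_num; ring
  · norm_num; ring
  · rw [if_neg (by omega : ¬(n+1+1+1=1)), if_neg (by omega : ¬(n+2=1))]; ring

lemma Scoef_eval {R : Type*} [CommRing R] (f : ℕ → R) (k : ℕ) :
    Scoef (PowerSeries.mk f) (k : ℤ) = f k := by
  simp [Scoef, PowerSeries.coeff_mk]

lemma Scoef_nat {R : Type*} [CommRing R] (f : PowerSeries R) (k : ℕ) :
    Scoef f (k : ℤ) = PowerSeries.coeff k f := by
  simp [Scoef]

lemma s0 (b c : R18) : Scoef (serA b c) 0 = 1 := by
  rw [serA, show (0:ℤ) = ((0:ℕ):ℤ) from rfl, Scoef_eval]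
lemma s1 (b c : R18) : Scoef (serA b c) 1 = xv - b - c := by
  rw [serA, show (1:ℤ) = ((1:ℕ):ℤ) from rfl, Scoef_eval]
lemma s2 (b c : R18) : Scoef (serA b c) 2 = (xv - b) * (xv - c) := by
  rw [serA, show (2:ℤ) = ((2:ℕ):ℤ) from rfl, Scoef_eval]; norm_num
lemma s3 (b c : R18) : Scoef (serA b c) 3 = xv ^ 1 * ((xv - b) * (xv - c)) := by
  rw [serA, show (3:ℤ) = ((3:ℕ):ℤ) from rfl, Scoef_eval]
lemma s4 (b c : R18) : Scoef (serA b c) 4 = xv ^ 2 * ((xv - b) * (xv - c)) := by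
  rw [serA, show (4:ℤ) = ((4:ℕ):ℤ) from rfl, Scoef_eval]
lemma s5 (b c : R18) : Scoef (serA b c) 5 = xv ^ 3 * ((xv - b) * (xv - c)) := by
  rw [serA, show (5:ℤ) = ((5:ℕ):ℤ) from rfl, Scoef_eval]
lemma s6 (b c : R18) : Scoef (serA b c) 6 = xv ^ 4 * ((xv - b) * (xv - c)) := by
  rw [serA, show (6:ℤ) = ((6:ℕ):ℤ) from rfl, Scoef_eval]
lemma sm1 (b c : R18) : Scoef (serA b c) (-1) = 0 := by norm_num [Scoef]

def g0ser : PowerSeries R18 := 1 - PowerSeries.C bv * PowerSeries.X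

lemma z0 : Scoef g0ser 0 = 1 := by
  rw [show (0:ℤ) = ((0:ℕ):ℤ) from rfl, Scoef_nat]
  simp [g0ser, coeff_C_mul, coeff_X, coeff_one]
lemma z1 : Scoef g0ser 1 = -bv := by
  rw [show (1:ℤ) = ((1:ℕ):ℤ) from rfl, Scoef_nat]
  simp [g0ser, coeff_C_mul, coeff_X, coeff_one]
lemma z2 : Scoef g0ser 2 = 0 := by
  rw [show (2:ℤ) = ((2:ℕ):ℤ) from rfl, Scoef_nat]
  simp [g0ser, coeff_C_mul, coeff_X, coeff_one]
lemma z3 : Scoef g0ser 3 = 0 := by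
  rw [show (3:ℤ) = ((3:ℕ):ℤ) from rfl, Scoef_nat]
  simp [g0ser, coeff_C_mul, coeff_X, coeff_one]
lemma z4 : Scoef g0ser 4 = 0 := by
  rw [show (4:ℤ) = ((4:ℕ):ℤ) from rfl, Scoef_nat]
  simp [g0ser, coeff_C_mul, coeff_X, coeff_one]
lemma z5 : Scoef g0ser 5 = 0 := by
  rw [show (5:ℤ) = ((5:ℕ):ℤ) from rfl, Scoef_nat]
  simp [g0ser, coeff_C_mul, coeff_X, coeff_one]
lemma z6 : Scoef g0ser 6 = 0 := by
  rw [show (6:ℤ) = ((6:ℕ):ℤ) from rfl, Scoef_nat]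
  simp [g0ser, coeff_C_mul, coeff_X, coeff_one]
lemma zm1 : Scoef g0ser (-1) = 0 := by norm_num [Scoef]

lemma one_sub_ne : (1 - PowerSeries.C xv * PowerSeries.X) ≠ 0 := by
  intro h
  have := congrArg (PowerSeries.constantCoeff) h
  simp at this

lemma T18_g0 : T18 g0ser = 0 := by
  simp only [T18, schurJT, Matrix.det_fin_three, Matrix.det_fin_two, Matrix.det_fin_one,
    Matrix.of_apply, Matrix.cons_val', Matrix.cons_val_zero, Matrix.cons_val_one,
    Matrix.head_cons, Matrix.empty_val', Matrix.cons_val_fin_one, Matrix.head_fin_const,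
    Matrix.cons_val_two, Matrix.tail_cons, Fin.isValue, Fin.val_zero, Fin.val_one, Fin.val_two]
  norm_num [z0, z1, z2, z3, z4, z5, z6, zm1]

lemma T18_serA_2 : T18 (serA bv (2 * xv)) = 0 := by
  simp only [T18, schurJT, Matrix.det_fin_three, Matrix.det_fin_two, Matrix.det_fin_one,
    Matrix.of_apply, Matrix.cons_val', Matrix.cons_val_zero, Matrix.cons_val_one,
    Matrix.head_cons, Matrix.empty_val', Matrix.cons_val_fin_one, Matrix.head_fin_const,
    Matrix.cons_val_two, Matrix.tail_cons, Fin.isValue, Fin.val_zero, Fin.val_one, Fin.val_two]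
  norm_num [s0, s1, s2, s3, s4, s5, s6, sm1]
  ring

lemma T18_serA_3 : T18 (serA bv (3 * xv)) = 0 := by
  simp only [T18, schurJT, Matrix.det_fin_three, Matrix.det_fin_two, Matrix.det_fin_one,
    Matrix.of_apply, Matrix.cons_val', Matrix.cons_val_zero, Matrix.cons_val_one,
    Matrix.head_cons, Matrix.empty_val', Matrix.cons_val_fin_one, Matrix.head_fin_const,
    Matrix.cons_val_two, Matrix.tail_cons, Fin.isValue, Fin.val_zero, Fin.val_one, Fin.val_two]
  norm_num [s0, s1, s2, s3, s4, s5, s6, sm1]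
  ring

lemma T18_serA_4 : T18 (serA bv (4 * xv)) =
    ((xv - bv) * (xv - 4 * xv)) * ((2 * xv - bv) * (2 * xv - 4 * xv)) *
        ((3 * xv - bv) * (3 * xv - 4 * xv)) := by
  simp only [T18, schurJT, Matrix.det_fin_three, Matrix.det_fin_two, Matrix.det_fin_one,
    Matrix.of_apply, Matrix.cons_val', Matrix.cons_val_zero, Matrix.cons_val_one,
    Matrix.head_cons, Matrix.empty_val', Matrix.cons_val_fin_one, Matrix.head_fin_const,
    Matrix.cons_val_two, Matrix.tail_cons, Fin.isValue, Fin.val_zero, Fin.val_one, Fin.val_two]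
  norm_num [s0, s1, s2, s3, s4, s5, s6, sm1]
  ring

/-- The `r = 2` Thom polynomial satisfies the `A`-series restriction equations:
`T(-{b}) = 0`, `T(x-{b,2x}) = 0`, `T(x-{b,3x}) = 0`, and
`T(x-{b,4x}) = ∏_{a∈{x,2x,3x}} ∏_{c∈{b,4x}} (a-c)`. -/
theorem thom_A3_r2_A_equations (g₀ g₂ g₃ g₄ : PowerSeries R18)
    (hg₀ : (1 : PowerSeries R18) * g₀ = 1 - PowerSeries.C bv * PowerSeries.X)
    (hg₂ : (1 - PowerSeries.C xv * PowerSeries.X) * g₂ =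
      (1 - PowerSeries.C bv * PowerSeries.X) *
        (1 - PowerSeries.C (2 * xv) * PowerSeries.X))
    (hg₃ : (1 - PowerSeries.C xv * PowerSeries.X) * g₃ =
      (1 - PowerSeries.C bv * PowerSeries.X) *
        (1 - PowerSeries.C (3 * xv) * PowerSeries.X))
    (hg₄ : (1 - PowerSeries.C xv * PowerSeries.X) * g₄ =
      (1 - PowerSeries.C bv * PowerSeries.X) *
        (1 - PowerSeries.C (4 * xv) * PowerSeries.X)) :
    T18 g₀ = 0 ∧ T18 g₂ = 0 ∧ T18 g₃ = 0 ∧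
    T18 g₄ =
      ((xv - bv) * (xv - 4 * xv)) * ((2 * xv - bv) * (2 * xv - 4 * xv)) *
        ((3 * xv - bv) * (3 * xv - 4 * xv)) := by
  have h0 : g₀ = g0ser := by unfold g0ser; rw [← hg₀, one_mul]
  have h2 : g₂ = serA bv (2 * xv) :=
    mul_left_cancel₀ one_sub_ne (by rw [hg₂, serA_mul])
  have h3 : g₃ = serA bv (3 * xv) :=
    mul_left_cancel₀ one_sub_ne (by rw [hg₃, serA_mul])
  have h4 : g₄ = serA bv (4 * xv) :=
    mul_left_cancel₀ one_sub_ne (by rw [hg₄, serA_mul])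
  exact ⟨h0 ▸ T18_g0, h2 ▸ T18_serA_2, h3 ▸ T18_serA_3, h4 ▸ T18_serA_4⟩

end
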